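/- Let n be a positive integer and let s₁ < s₂ < ... < s_n be integers, S = {s₁,...,s_n}. Then the number of triangular arrays of integers (a_{i,j})_{1 ≤ j ≤ i ≤ n} satisfying a_{n,j} = s_j for all 1 ≤ j ≤ n, and a_{i+1,j} ≤ a_{i,j} < a_{i+1,j+1} for all 1 ≤ j ≤ i ≤ n−1, equals Δ(S)/H(n); equivalently, H(n) times this number equals Δ(S). -/

import Mathlib

/-- `Δ(S) = ∏_{s₁,s₂ ∈ S, s₁ < s₂} (s₂ - s₁)`. -/
def Dset (S : Finset ℤ) : ℤ :=
  ∏ x ∈ S, ∏ y ∈ S.filter (fun y => x < y), (y - x)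

/-- The hyperfactorial `H(n) = 0! · 1! ··· (n-1)!`. -/
def hyperfac (n : ℕ) : ℕ :=
  ∏ i ∈ Finset.range n, Nat.factorial i


section KeyBPart
open Polynomial Finset


lemma Ico_succ_right_int (a b : ℤ) (h : a ≤ b) :
    Finset.Ico a (b+1) = insert b (Finset.Ico a b) := by
  ext x; simp only [Finset.mem_Ico, Finset.mem_insert]; omega

lemma sum_Ico_telescope (f : ℤ → ℤ) {a b : ℤ} (h : a ≤ b) :
    ∑ x ∈ Finset.Ico a b, (f (x+1) - f x) = f b - f a := by
  have key : ∀ n : ℕ, ∀ a : ℤ, ∑ x ∈ Finset.Ico a (a + n), (f (x+1) - f x) = f (a + n) - f a := by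
    intro n
    induction n with
    | zero => simp
    | succ n ih =>
      intro a
      have h1 : (a : ℤ) + (n+1 : ℕ) = (a + n) + 1 := by push_cast; ring
      rw [h1, Ico_succ_right_int a (a+n) (by omega), Finset.sum_insert (by simp), ih]
      ring
  have hb : b = a + ((b - a).toNat : ℤ) := by omega
  rw [hb] at *
  exact key _ a

lemma dP_diff (k : ℕ) (x : ℤ) :
    (descPochhammer ℤ (k+1)).eval (x+1) - (descPochhammer ℤ (k+1)).eval x
      = ((k:ℤ)+1) * (descPochhammer ℤ k).eval x := by
  nth_rewrite 1 [descPochhammer_succ_left]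
  rw [descPochhammer_succ_right]
  simp [eval_comp]
  ring

lemma sum_dP (k : ℕ) {a b : ℤ} (h : a ≤ b) :
    ((k:ℤ)+1) * ∑ x ∈ Finset.Ico a b, (descPochhammer ℤ k).eval x
      = (descPochhammer ℤ (k+1)).eval b - (descPochhammer ℤ (k+1)).eval a := by
  rw [Finset.mul_sum, ← sum_Ico_telescope (fun x => (descPochhammer ℤ (k+1)).eval x) h]
  exact Finset.sum_congr rfl fun x _ => (dP_diff k x).symm

lemma vand_eq_det (m : ℕ) (t : Fin m → ℤ) :
    (∏ i, ∏ j ∈ Finset.Ioi i, (t j - t i))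
      = (Matrix.of fun i j : Fin m => (descPochhammer ℤ (j:ℕ)).eval (t i)).det := by
  rw [← Matrix.det_vandermonde t]
  exact Matrix.det_eval_matrixOfPolynomials_eq_det_vandermonde t
    (fun i => descPochhammer ℤ (i:ℕ))
    (fun i => descPochhammer_natDegree _ _) (fun i => monic_descPochhammer _ _)

lemma keyB (m : ℕ) (s : Fin (m+1) → ℤ) (hs : Monotone s) :
    (m.factorial : ℤ) *
      ∑ t ∈ Fintype.piFinset (fun j : Fin m => Finset.Ico (s j.castSucc) (s j.succ)),
        ∏ i, ∏ j ∈ Finset.Ioi i, (t j - t i)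
    = ∏ i, ∏ j ∈ Finset.Ioi i, (s j - s i) := by
  classical
  set A : Fin m → Finset ℤ := fun i => Finset.Ico (s i.castSucc) (s i.succ) with hA
  -- Step 1: sum of determinants = determinant of sums
  have step1 :
      ∑ t ∈ Fintype.piFinset A,
          (Matrix.of fun i j : Fin m => (descPochhammer ℤ (j:ℕ)).eval (t i)).det
      = (Matrix.of fun i j : Fin m =>
          ∑ x ∈ A i, (descPochhammer ℤ (j:ℕ)).eval x).det := by
    have h := (Matrix.detRowAlternating :
        (Fin m → ℤ) [⋀^Fin m]→ₗ[ℤ] ℤ).toMultilinearMap.map_sum_finset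
      (g := fun (i : Fin m) (x : ℤ) => fun j : Fin m => (descPochhammer ℤ (j:ℕ)).eval x)
      (A := A)
    have hrow : (fun (i : Fin m) => ∑ x ∈ A i, fun j : Fin m => (descPochhammer ℤ (j:ℕ)).eval x)
        = fun (i : Fin m) (j : Fin m) => ∑ x ∈ A i, (descPochhammer ℤ (j:ℕ)).eval x := by
      funext i j
      simp
    rw [hrow] at h
    exact h.symm
  set N : Matrix (Fin m) (Fin m) ℤ :=
    Matrix.of (fun i j : Fin m => ∑ x ∈ A i, (descPochhammer ℤ (j:ℕ)).eval x) with hN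
  set M₂ : Matrix (Fin m) (Fin m) ℤ :=
    Matrix.of (fun i j : Fin m => (descPochhammer ℤ ((j:ℕ)+1)).eval (s i.succ)
      - (descPochhammer ℤ ((j:ℕ)+1)).eval (s i.castSucc)) with hM2
  have hfact : (∏ j : Fin m, ((j:ℤ)+1)) = (m.factorial : ℤ) := by
    rw [Fin.prod_univ_eq_prod_range (fun j => ((j:ℤ)+1)) m]
    push_cast [← Finset.prod_range_add_one_eq_factorial]
    rfl
  have step2 : (m.factorial : ℤ) * N.det = M₂.det := by
    rw [← hfact, ← Matrix.det_mul_row]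
    congr 1
    funext i j
    simp only [Matrix.of_apply, hN]
    rw [sum_dP _ (hs (Fin.castSucc_le_succ i))]
    rfl
  -- the (m+1) × (m+1) matrices
  set B : Matrix (Fin (m+1)) (Fin (m+1)) ℤ :=
    Matrix.of (fun i j : Fin (m+1) => (descPochhammer ℤ (j:ℕ)).eval (s i)) with hB
  set T : Matrix (Fin (m+1)) (Fin (m+1)) ℤ :=
    Matrix.of (fun i k : Fin (m+1) =>
      (if k = i then (1:ℤ) else 0) - (if (k:ℕ)+1 = (i:ℕ) then 1 else 0)) with hT
  have hdetT : T.det = 1 := by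
    have ht : T.BlockTriangular OrderDual.toDual := by
      intro i j hij
      have hlt : i < j := hij
      have hij' : (i:ℕ) < (j:ℕ) := hlt
      simp only [hT, Matrix.of_apply]
      have h1 : ¬(j = i) := ne_of_gt hlt
      have h2 : ¬((j:ℕ)+1 = (i:ℕ)) := by
        intro hc
        rw [← hc] at hij'
        exact Nat.lt_irrefl _ (Nat.lt_of_succ_lt hij')
      rw [if_neg h1, if_neg h2]
      ring
    rw [Matrix.det_of_lowerTriangular T ht]
    simp [hT]
  have hTB : ∀ (i j : Fin (m+1)), (T * B) i j
      = B i j - ∑ k : Fin (m+1), (if (k:ℕ)+1 = (i:ℕ) then B k j else 0) := by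
    intro i j
    simp only [Matrix.mul_apply, hT, Matrix.of_apply, sub_mul, ite_mul, one_mul, zero_mul,
      Finset.sum_sub_distrib]
    congr 1
    simp
  have hTB0 : ∀ j, (T * B) 0 j = B 0 j := by
    intro j
    rw [hTB]
    have : ∀ k : Fin (m+1), (if (k:ℕ)+1 = ((0 : Fin (m+1)):ℕ) then B k j else 0) = 0 := by
      intro k
      rw [if_neg (by simp)]
    simp [this]
  have hTBs : ∀ (i : Fin m) (j), (T * B) i.succ j = B i.succ j - B i.castSucc j := by
    intro i j
    rw [hTB]
    congr 1
    rw [Finset.sum_eq_single i.castSucc]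
    · rw [if_pos (by simp)]
    · intro k _ hk
      rw [if_neg]
      intro hc
      apply hk
      apply Fin.ext
      simpa using hc
    · intro h
      exact absurd (Finset.mem_univ _) h
  have hdetB : B.det = ∏ i, ∏ j ∈ Finset.Ioi i, (s j - s i) := (vand_eq_det (m+1) s).symm
  -- expand det (T * B) along the first column
  have hcol : ∀ i : Fin (m+1), (T * B) i 0 = if i = 0 then 1 else 0 := by
    intro i
    rcases Fin.eq_zero_or_eq_succ i with h0 | ⟨i', rfl⟩
    · subst h0
      rw [hTB0, if_pos rfl]
      simp [hB, descPochhammer_zero]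
    · rw [hTBs, if_neg (Fin.succ_ne_zero i')]
      simp [hB, descPochhammer_zero]
  have hsub : (T * B).submatrix Fin.succ Fin.succ = M₂ := by
    funext i j
    rw [Matrix.submatrix_apply, hTBs]
    simp [hB, hM2, Fin.val_succ]
  have hexp : (T * B).det = M₂.det := by
    rw [Matrix.det_succ_column_zero]
    rw [Finset.sum_eq_single 0]
    · rw [hcol 0, if_pos rfl]
      simp [hsub]
    · intro i _ hi
      rw [hcol i, if_neg hi]
      ring
    · intro h
      exact absurd (Finset.mem_univ _) h
  have : M₂.det = ∏ i, ∏ j ∈ Finset.Ioi i, (s j - s i) := by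
    rw [← hexp, Matrix.det_mul, hdetT, one_mul, hdetB]
  calc (m.factorial : ℤ) * ∑ t ∈ Fintype.piFinset A, ∏ i, ∏ j ∈ Finset.Ioi i, (t j - t i)
      = (m.factorial : ℤ) * N.det := by
        congr 1
        rw [← step1]
        exact Finset.sum_congr rfl fun t _ => vand_eq_det m t
    _ = M₂.det := step2
    _ = _ := this


end KeyBPart

def GT (m : ℕ) (s : Fin (m+1) → ℤ) : Set ((i : Fin (m+1)) → Fin (i.1+1) → ℤ) :=
  {a | (∀ j : Fin (m+1), a ⟨m, by omega⟩ ⟨j.1, j.2⟩ = s j) ∧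
       (∀ (r : ℕ) (hr : r + 1 < m+1) (j : Fin (r + 1)),
         a ⟨r+1, hr⟩ j.castSucc ≤ a ⟨r, by omega⟩ j ∧
         a ⟨r, by omega⟩ j < a ⟨r+1, hr⟩ j.succ)}

def botRow (m : ℕ) (a : (i : Fin (m+2)) → Fin (i.1+1) → ℤ) : Fin (m+1) → ℤ :=
  fun j => a ⟨m, by omega⟩ j

def restrict (m : ℕ) (a : (i : Fin (m+2)) → Fin (i.1+1) → ℤ) :
    (i : Fin (m+1)) → Fin (i.1+1) → ℤ :=
  fun i j => a ⟨i.1, by omega⟩ j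

def extend (m : ℕ) (s : Fin (m+2) → ℤ) (b : (i : Fin (m+1)) → Fin (i.1+1) → ℤ) :
    (i : Fin (m+2)) → Fin (i.1+1) → ℤ :=
  fun i => if h : i.1 < m+1 then fun j => b ⟨i.1, h⟩ j
    else fun j => s ⟨j.1, by omega⟩

noncomputable def box (m : ℕ) (s : Fin (m+2) → ℤ) : Finset (Fin (m+1) → ℤ) :=
  Fintype.piFinset (fun j : Fin (m+1) => Finset.Ico (s j.castSucc) (s j.succ))

lemma mem_box (m : ℕ) (s : Fin (m+2) → ℤ) (t : Fin (m+1) → ℤ) :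
    t ∈ box m s ↔ ∀ j : Fin (m+1), s j.castSucc ≤ t j ∧ t j < s j.succ := by
  simp [box, Fintype.mem_piFinset, Finset.mem_Ico]

lemma restrict_mem (m : ℕ) (s : Fin (m+2) → ℤ)
    (a : (i : Fin (m+2)) → Fin (i.1+1) → ℤ) (ha : a ∈ GT (m+1) s) :
    restrict m a ∈ GT m (botRow m a) := by
  obtain ⟨h1, h2⟩ := ha
  constructor
  · intro j
    rfl
  · intro r hr j
    exact h2 r (by omega) j

lemma botRow_mem (m : ℕ) (s : Fin (m+2) → ℤ)
    (a : (i : Fin (m+2)) → Fin (i.1+1) → ℤ) (ha : a ∈ GT (m+1) s) :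
    botRow m a ∈ box m s := by
  obtain ⟨h1, h2⟩ := ha
  rw [mem_box]
  intro j
  have h := h2 m (by omega) j
  constructor
  · calc s j.castSucc = a ⟨m+1, by omega⟩ ⟨j.castSucc.1, j.castSucc.2⟩ := (h1 j.castSucc).symm
      _ ≤ botRow m a j := h.1
  · calc botRow m a j < a ⟨m+1, by omega⟩ ⟨j.succ.1, j.succ.2⟩ := h.2
      _ = s j.succ := h1 j.succ

lemma extend_mem (m : ℕ) (s : Fin (m+2) → ℤ) (t : Fin (m+1) → ℤ) (ht : t ∈ box m s)
    (b : (i : Fin (m+1)) → Fin (i.1+1) → ℤ) (hb : b ∈ GT m t) :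
    extend m s b ∈ GT (m+1) s := by
  obtain ⟨h1, h2⟩ := hb
  rw [mem_box] at ht
  constructor
  · intro j
    show (extend m s b ⟨m+1, by omega⟩) ⟨j.1, j.2⟩ = s j
    have e1 : extend m s b ⟨m+1, by omega⟩ = fun j : Fin (m+2) => s ⟨j.1, by omega⟩ :=
      dif_neg (show ¬(m+1 < m+1) by omega)
    rw [e1]
  · intro r hr j
    by_cases hr2 : r + 1 < m + 1
    · have e1 : extend m s b ⟨r+1, hr⟩ = fun j : Fin (r+2) => b ⟨r+1, hr2⟩ j :=
        dif_pos hr2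
      have e2 : extend m s b ⟨r, by omega⟩ = fun j : Fin (r+1) => b ⟨r, by omega⟩ j :=
        dif_pos (show r < m+1 by omega)
      rw [e1, e2]
      exact h2 r hr2 j
    · obtain rfl : r = m := by omega
      have e1 : extend r s b ⟨r+1, hr⟩ = fun j : Fin (r+2) => s ⟨j.1, by omega⟩ :=
        dif_neg (show ¬(r+1 < r+1) by omega)
      have e2 : extend r s b ⟨r, by omega⟩ = fun j : Fin (r+1) => b ⟨r, by omega⟩ j :=
        dif_pos (show r < r+1 by omega)
      rw [e1, e2]
      have hbt : b ⟨r, by omega⟩ j = t j := h1 j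
      constructor
      · show s ⟨j.castSucc.1, by omega⟩ ≤ b ⟨r, by omega⟩ j
        rw [hbt]
        exact (ht j).1
      · show b ⟨r, by omega⟩ j < s ⟨j.succ.1, by omega⟩
        rw [hbt]
        exact (ht j).2

lemma extend_restrict (m : ℕ) (s : Fin (m+2) → ℤ)
    (a : (i : Fin (m+2)) → Fin (i.1+1) → ℤ) (ha : a ∈ GT (m+1) s) :
    extend m s (restrict m a) = a := by
  funext i
  by_cases h : i.1 < m+1
  · have e : extend m s (restrict m a) i = fun j : Fin (i.1+1) => restrict m a ⟨i.1, h⟩ j :=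
      dif_pos h
    rw [e]
    funext j
    rfl
  · have him : i = ⟨m+1, Nat.lt_succ_self (m+1)⟩ := Fin.ext (show i.1 = m+1 by omega)
    rw [him]
    have e : extend m s (restrict m a) ⟨m+1, Nat.lt_succ_self (m+1)⟩
        = fun j : Fin (m+2) => s ⟨j.1, by omega⟩ := dif_neg (show ¬(m+1 < m+1) by omega)
    rw [e]
    funext j
    exact (ha.1 j).symm

lemma restrict_extend (m : ℕ) (s : Fin (m+2) → ℤ)
    (b : (i : Fin (m+1)) → Fin (i.1+1) → ℤ) :
    restrict m (extend m s b) = b := by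
  funext i j
  show extend m s b ⟨i.1, by omega⟩ j = b i j
  have e : extend m s b ⟨i.1, by omega⟩ = fun j : Fin (i.1+1) => b ⟨i.1, i.2⟩ j :=
    dif_pos i.2
  rw [e]

lemma botRow_extend (m : ℕ) (s : Fin (m+2) → ℤ) (t : Fin (m+1) → ℤ)
    (b : (i : Fin (m+1)) → Fin (i.1+1) → ℤ) (hb : b ∈ GT m t) :
    botRow m (extend m s b) = t := by
  funext j
  show extend m s b ⟨m, by omega⟩ j = t j
  have e : extend m s b ⟨m, by omega⟩ = fun j : Fin (m+1) => b ⟨m, by omega⟩ j :=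
    dif_pos (show m < m+1 by omega)
  rw [e]
  exact hb.1 j

noncomputable def GTequiv (m : ℕ) (s : Fin (m+2) → ℤ) :
    ↥(GT (m+1) s) ≃ (t : ↥(box m s)) × ↥(GT m t.1) where
  toFun a := ⟨⟨botRow m a.1, botRow_mem m s a.1 a.2⟩,
              ⟨restrict m a.1, restrict_mem m s a.1 a.2⟩⟩
  invFun p := ⟨extend m s p.2.1, extend_mem m s p.1.1 p.1.2 p.2.1 p.2.2⟩
  left_inv a := Subtype.ext (extend_restrict m s a.1 a.2)
  right_inv p := by
    rcases p with ⟨⟨t, ht⟩, ⟨b, hb⟩⟩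
    have h1 : botRow m (extend m s b) = t := botRow_extend m s t b hb
    refine Sigma.ext (Subtype.ext h1) ?_
    refine (Subtype.heq_iff_coe_eq ?_).mpr (restrict_extend m s b)
    intro x
    show x ∈ GT m (botRow m (extend m s b)) ↔ x ∈ GT m t
    rw [h1]

lemma GT_card (m : ℕ) : ∀ (s : Fin (m+1) → ℤ), StrictMono s →
    (GT m s).Finite ∧ (hyperfac (m+1) : ℤ) * ((GT m s).ncard : ℤ)
      = ∏ i, ∏ j ∈ Finset.Ioi i, (s j - s i) := by
  induction m with
  | zero =>
    intro s _
    have hset : GT 0 s = {fun (i : Fin 1) (j : Fin (i.1+1)) => s ⟨j.1, by omega⟩} := by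
      apply Set.eq_of_subset_of_subset
      · intro a ha
        funext i j
        have hi : i = ⟨0, by omega⟩ := Fin.ext (show i.1 = 0 by omega)
        subst hi
        exact ha.1 ⟨j.1, j.2⟩
      · intro a ha
        rw [Set.mem_singleton_iff] at ha
        subst ha
        constructor
        · intro j
          rfl
        · intro r hr j
          exact absurd hr (by omega)
    constructor
    · rw [hset]
      exact Set.finite_singleton _
    · rw [hset, Set.ncard_singleton]
      have h1 : hyperfac 1 = 1 := by simp [hyperfac]
      have h2 : ∀ i : Fin 1, Finset.Ioi i = ∅ := by decide
      simp [h1, h2]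
  | succ m ih =>
    intro s hs
    have hsbox : ∀ t ∈ box m s, StrictMono t := by
      intro t ht
      rw [mem_box] at ht
      intro j j' hjj
      calc t j < s j.succ := (ht j).2
        _ ≤ s j'.castSucc := hs.monotone (by
            rw [Fin.le_def]
            have : (j:ℕ) < (j':ℕ) := hjj
            simp only [Fin.val_succ, Fin.coe_castSucc]
            omega)
        _ ≤ t j' := (ht j').1
    haveI instf : ∀ t : ↥(box m s), Finite ↥(GT m t.1) :=
      fun t => ((ih t.1 (hsbox t.1 t.2)).1).to_subtype
    have e := GTequiv m s
    have hfin : (GT (m+1) s).Finite := by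
      rw [← Set.finite_coe_iff]
      exact Finite.of_equiv _ e.symm
    refine ⟨hfin, ?_⟩
    haveI instf2 : ∀ t : ↥(box m s), Fintype ↥(GT m t.1) :=
      fun t => ((ih t.1 (hsbox t.1 t.2)).1).fintype
    have hcard : (GT (m+1) s).ncard = ∑ t ∈ box m s, (GT m t).ncard := by
      rw [← Nat.card_coe_set_eq, Nat.card_congr e, Nat.card_eq_fintype_card,
        Fintype.card_sigma, ← Finset.sum_coe_sort (box m s) (fun t => (GT m t).ncard)]
      apply Finset.sum_congr rfl
      intro t _
      rw [← Nat.card_coe_set_eq, Nat.card_eq_fintype_card]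
    have hh : (hyperfac (m+2) : ℤ) = (hyperfac (m+1) : ℤ) * ((m+1).factorial : ℤ) := by
      have : hyperfac (m+2) = hyperfac (m+1) * (m+1).factorial := by
        simp [hyperfac, Finset.prod_range_succ]
      rw [this]
      push_cast
      ring
    rw [hcard, hh]
    push_cast
    have hsum : ∀ t ∈ box m s,
        (hyperfac (m+1) : ℤ) * ((GT m t).ncard : ℤ) = ∏ i, ∏ j ∈ Finset.Ioi i, (t j - t i) :=
      fun t ht => (ih t (hsbox t ht)).2
    calc (hyperfac (m+1) : ℤ) * ((m+1).factorial : ℤ) * ∑ t ∈ box m s, ((GT m t).ncard : ℤ)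
        = ((m+1).factorial : ℤ) * ∑ t ∈ box m s, (hyperfac (m+1) : ℤ) * ((GT m t).ncard : ℤ) := by
          rw [Finset.mul_sum, Finset.mul_sum]
          exact Finset.sum_congr rfl fun t _ => by ring
      _ = ((m+1).factorial : ℤ) * ∑ t ∈ box m s, ∏ i, ∏ j ∈ Finset.Ioi i, (t j - t i) := by
          congr 1
          exact Finset.sum_congr rfl hsum
      _ = ∏ i, ∏ j ∈ Finset.Ioi i, (s j - s i) := keyB (m+1) s hs.monotone

lemma Dset_eq (n : ℕ) (s : Fin n → ℤ) (hs : StrictMono s) :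
    Dset (Finset.image s Finset.univ) = ∏ i, ∏ j ∈ Finset.Ioi i, (s j - s i) := by
  unfold Dset
  rw [Finset.prod_image (fun a _ b _ h => hs.injective h)]
  refine Finset.prod_congr rfl fun i _ => ?_
  have hfil : (Finset.image s Finset.univ).filter (fun y => s i < y)
      = Finset.image s (Finset.Ioi i) := by
    ext y
    simp only [Finset.mem_filter, Finset.mem_image, Finset.mem_Ioi, Finset.mem_univ, true_and]
    constructor
    · rintro ⟨⟨j, rfl⟩, hlt⟩
      exact ⟨j, hs.lt_iff_lt.mp hlt, rfl⟩
    · rintro ⟨j, hj, rfl⟩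
      exact ⟨⟨j, rfl⟩, hs hj⟩
  rw [hfil, Finset.prod_image (fun a _ b _ h => hs.injective h)]


/-- Gelfand–Tsetlin: the number of interlacing triangular arrays with strictly
increasing rows and prescribed bottom row `s₁ < s₂ < ... < sₙ` equals `Δ(S)/H(n)`;
here stated as `H(n)` times the count equals `Δ(S)`.  Row `i` (for `i : Fin n`)
has `i.1 + 1` entries. -/
theorem gelfand_tsetlin_count (n : ℕ) (hn : 0 < n) (s : Fin n → ℤ) (hs : StrictMono s) :
    (hyperfac n : ℤ) *
      (Set.ncard {a : (i : Fin n) → Fin (i.1 + 1) → ℤ |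
        (∀ j : Fin n, a ⟨n - 1, by omega⟩ (Fin.cast (by omega : n = n - 1 + 1) j) = s j) ∧
        (∀ (r : ℕ) (hr : r + 1 < n) (j : Fin (r + 1)),
          a ⟨r + 1, hr⟩ j.castSucc ≤ a ⟨r, by omega⟩ j ∧
          a ⟨r, by omega⟩ j < a ⟨r + 1, hr⟩ j.succ)} : ℤ) =
      Dset (Finset.image s Finset.univ) := by
  obtain ⟨m, rfl⟩ : ∃ m, n = m + 1 := ⟨n - 1, by omega⟩
  rw [Dset_eq _ s hs]
  exact (GT_card m s hs).2
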